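/- arXiv:1302.3024 — 2 statements merged into one kernel-verified Lean document; each statement's English description precedes it below -/
import Mathlib

section
/- Let f : Θ × X → Θ × X be a homeomorphism of skew product form f(θ,x) = (α(θ), f_θ(x)), where α is a minimal homeomorphism of a compact metric space Θ and X is a compact metric space, and let M ⊆ Θ × X be a nonempty compact f-invariant set with π₁(M) = Θ. If M_{θ₀} = {x : (θ₀,x) ∈ M} is a singleton for some θ₀ ∈ Θ (i.e. M is pinched), then the set {θ ∈ Θ : M_θ is a singleton} is dense in Θ; consequently the projection π₁|_M is an almost 1-1 factor map from (M, f|_M) onto (Θ, α), and if moreover α is almost periodic and M is minimal, then M is an almost automorphic minimal set. -/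
open Set Function MeasureTheory

noncomputable section

/-- The circle `T¹ = ℝ/ℤ`. -/
abbrev T1 := AddCircle (1 : ℝ)

/-- The `n`-th iterate (`n ∈ ℤ`) of a bijection. -/
def zIter {X : Type*} (g : Equiv.Perm X) (n : ℤ) : X → X := fun x => (g ^ n) x

/-- A set of integers is syndetic if it has bounded gaps. -/
def ZSyndetic (S : Set ℤ) : Prop := ∃ N : ℕ, ∀ n : ℤ, ∃ k ∈ S, |k - n| ≤ (N : ℤ)

/-- A homeomorphism `α` of a metric space is almost periodic if for every `ε > 0` the set
`{n ∈ ℤ | dist(αⁿ, Id) < ε}` is syndetic. -/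
def AlmostPeriodicHomeo {Θ : Type*} [MetricSpace Θ] (α : Θ ≃ₜ Θ) : Prop :=
  ∀ ε > (0 : ℝ), ZSyndetic {n : ℤ | ∀ θ : Θ, dist (zIter α.toEquiv n θ) θ < ε}

/-- A homeomorphism is minimal if every (two-sided) orbit is dense. -/
def MinimalHomeo {Θ : Type*} [TopologicalSpace Θ] (α : Θ ≃ₜ Θ) : Prop :=
  ∀ θ : Θ, Dense (range fun n : ℤ => zIter α.toEquiv n θ)

/-- A self-map `g` of a metric space is almost periodic if its family of iterates
is (uniformly) equicontinuous. -/
def AlmostPeriodicMap {Y : Type*} [MetricSpace Y] (g : Y → Y) : Prop :=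
  ∀ ε > (0 : ℝ), ∃ δ > (0 : ℝ), ∀ y y' : Y, dist y y' < δ → ∀ n : ℕ, dist (g^[n] y) (g^[n] y') < ε

/-- `h` is a factor map (semiconjugacy) from `(X, f)` onto `(Y, g)`:
a continuous surjection with `h ∘ f = g ∘ h`.  Then `(X, f)` is a topological
extension of `(Y, g)`. -/
def IsFactorMap {X Y : Type*} [TopologicalSpace X] [TopologicalSpace Y]
    (f : X → X) (g : Y → Y) (h : X → Y) : Prop :=
  Continuous h ∧ Surjective h ∧ h ∘ f = g ∘ h

/-- A map `h` is almost 1-1 if the set of points of the target having exactly one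
preimage is dense. -/
def AlmostOneOne {X Y : Type*} [TopologicalSpace Y] (h : X → Y) : Prop :=
  Dense {y : Y | ∃! x, h x = y}

/-- A witness that the system `(X, f)` is almost automorphic: an almost periodic
homeomorphism of a compact metric space which is an almost 1-1 factor of `(X, f)`. -/
structure AAWitness {X : Type*} [TopologicalSpace X] (f : X → X) where
  (Y : Type)
  [mY : MetricSpace Y]
  [cY : CompactSpace Y]
  (g : Y ≃ₜ Y)
  (hmap : X → Y)
  (factor : IsFactorMap f (⇑g) hmap)
  (a11 : AlmostOneOne hmap)
  (ap : ∀ ε > (0 : ℝ), ∃ δ > (0 : ℝ), ∀ y y' : Y, dist y y' < δ →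
        ∀ n : ℤ, dist (zIter g.toEquiv n y) (zIter g.toEquiv n y') < ε)

/-- `M` is a minimal set of `f`: nonempty, closed, invariant, and without proper
nonempty closed invariant subsets. -/
def IsMinimalSet {X : Type*} [TopologicalSpace X] (f : X → X) (M : Set X) : Prop :=
  M.Nonempty ∧ IsClosed M ∧ f '' M = M ∧
    ∀ M' ⊆ M, M'.Nonempty → IsClosed M' → f '' M' ⊆ M' → M' = M

/-- The restriction of `f` to an invariant set. -/
def restrictMap {X : Type*} {f : X → X} {M : Set X} (hM : Set.MapsTo f M M) : ↥M → ↥M :=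
  Set.MapsTo.restrict f M M hM

/-- `M` is an almost automorphic minimal set of `f`: `f` restricted to `M` admits an
almost periodic almost 1-1 factor. -/
def IsAAMinimal {X : Type*} [MetricSpace X] (f : X → X) (M : Set X) : Prop :=
  IsMinimalSet f M ∧ ∀ hM : Set.MapsTo f M M, Nonempty (AAWitness (restrictMap hM))

/-- `M` is an almost periodic minimal set of `f`: the family of iterates of the
restriction of `f` to `M` is equicontinuous. -/
def IsAPMinimal {X : Type*} [MetricSpace X] (f : X → X) (M : Set X) : Prop :=
  IsMinimalSet f M ∧ ∀ hM : Set.MapsTo f M M, AlmostPeriodicMap (restrictMap hM)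

/-- A subset of a product is pinched if some fibre is a singleton. -/
def Pinched {Θ X : Type*} (A : Set (Θ × X)) : Prop := ∃ θ : Θ, ∃! x : X, (θ, x) ∈ A

/-- An `α`-forced increasing interval map on `Θ × I`: a continuous skew product over `α`
whose fibre maps are strictly increasing. -/
def ForcedIncreasing {Θ : Type*} [TopologicalSpace Θ] {I : Set ℝ} (α : Θ → Θ)
    (f : Θ × ↥I → Θ × ↥I) : Prop :=
  Continuous f ∧ (∀ p : Θ × ↥I, (f p).1 = α p.1) ∧
    ∀ θ : Θ, StrictMono fun x : ↥I => (f (θ, x)).2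

/-- The fibre of `M ⊆ Θ × I` over `θ`, as a set of reals. -/
def fiberSet {Θ : Type*} {I : Set ℝ} (M : Set (Θ × ↥I)) (θ : Θ) : Set ℝ :=
  (fun x : ↥I => (x : ℝ)) '' {x : ↥I | (θ, x) ∈ M}

/-- The filled-in envelope `[φ⁻_M, φ⁺_M]` of `M`, where `φ⁻_M(θ) = inf M_θ` and
`φ⁺_M(θ) = sup M_θ`. -/
def FilledEnvelope {Θ : Type*} {I : Set ℝ} (M : Set (Θ × ↥I)) : Set (Θ × ↥I) :=
  {p : Θ × ↥I | sInf (fiberSet M p.1) ≤ (p.2 : ℝ) ∧ (p.2 : ℝ) ≤ sSup (fiberSet M p.1)}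

/-- The graph of a curve `γ : Θ → I`. -/
def curveGraph {Θ : Type*} {I : Set ℝ} (γ : Θ → ↥I) : Set (Θ × ↥I) :=
  {p : Θ × ↥I | p.2 = γ p.1}

/-- The conclusion of the blow-up construction (properties (i)-(v) of the main theorem):
`f̂` is a topological extension of `f` via the fibre-respecting factor map `h`, `f̂` is an
`α`-forced increasing interval map, the fibre maps of `h` are non-decreasing, `h` is
injective off `h⁻¹(Γ)`, countably many points of `Γ` have non-degenerate vertical-segment
preimages while all other points of `Γ` have singleton preimages, and `h⁻¹(Γ)` contains
the graph of no continuous curve. -/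
def BlowUpConclusion {Θ : Type*} [TopologicalSpace Θ] {I : Set ℝ}
    (α : Θ → Θ) (f : Θ × ↥I → Θ × ↥I) (γ : Θ → ↥I)
    (fhat : Θ × ↥I → Θ × ↥I) (h : Θ × ↥I → Θ × ↥I) : Prop :=
  IsFactorMap fhat f h ∧ (∀ p : Θ × ↥I, (h p).1 = p.1) ∧
  ForcedIncreasing α fhat ∧
  (∀ θ : Θ, Monotone fun x : ↥I => (h (θ, x)).2) ∧
  Set.InjOn h (h ⁻¹' curveGraph γ)ᶜ ∧
  (∃ C : Set (Θ × ↥I), C ⊆ curveGraph γ ∧ C.Countable ∧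
    (∀ p ∈ C, ∃ x₁ x₂ : ↥I, x₁ < x₂ ∧ h ⁻¹' {p} = {p.1} ×ˢ Set.Icc x₁ x₂) ∧
    (∀ p ∈ curveGraph γ \ C, ∃ x : ↥I, h ⁻¹' {p} = {(p.1, x)})) ∧
  (∀ η : Θ → ↥I, Continuous η → ¬ (curveGraph η ⊆ h ⁻¹' curveGraph γ))



/-- Auxiliary: successor step for `zIter`. -/
lemma zIter_succ_aux {X : Type*} (g : Equiv.Perm X) (n : ℤ) (x : X) :
    zIter g (n + 1) x = g (zIter g n x) := by
  show (g ^ (n + 1)) x = g ((g ^ n) x)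
  rw [add_comm, zpow_add, zpow_one, Equiv.Perm.mul_apply]

/-- Auxiliary: predecessor step for `zIter`. -/
lemma zIter_pred_aux {X : Type*} (g : Equiv.Perm X) (n : ℤ) (x : X) :
    zIter g (n - 1) x = g⁻¹ (zIter g n x) := by
  show (g ^ (n - 1)) x = g⁻¹ ((g ^ n) x)
  rw [sub_eq_add_neg, add_comm, zpow_add, Equiv.Perm.mul_apply, zpow_neg_one]

/-- Auxiliary: `zIter` of a homeomorphism is continuous. -/
lemma zIter_cont_aux {Θ : Type} [MetricSpace Θ] (α : Θ ≃ₜ Θ) (n : ℤ) :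
    Continuous (zIter α.toEquiv n) := by
  induction n using Int.induction_on with
  | zero => exact continuous_id.congr fun x => by simp [zIter]
  | succ k ih =>
      have h : zIter α.toEquiv (k + 1) = ⇑α ∘ zIter α.toEquiv k := by
        funext x; exact zIter_succ_aux _ _ _
      rw [h]; exact α.continuous.comp ih
  | pred k ih =>
      have h : zIter α.toEquiv (-k - 1) = ⇑α.symm ∘ zIter α.toEquiv (-k) := by
        funext x; rw [zIter_pred_aux]; rfl
      rw [h]; exact α.symm.continuous.comp ih

/-- Auxiliary: singleton fibres propagate one step along the base. -/
lemma pinch_step_aux {Θ X : Type} (α : Equiv.Perm Θ) (f : Equiv.Perm (Θ × X))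
    (hskew : ∀ p : Θ × X, (f p).1 = α p.1) (M : Set (Θ × X)) (hMinv : ⇑f '' M = M)
    (θ : Θ) (h : ∃! x : X, (θ, x) ∈ M) : ∃! x : X, (α θ, x) ∈ M := by
  obtain ⟨x₀, hx₀, hu⟩ := h
  have hf : f (θ, x₀) = (α θ, (f (θ, x₀)).2) := by
    rw [← hskew (θ, x₀)]
  refine ⟨(f (θ, x₀)).2, ?_, ?_⟩
  · show (α θ, (f (θ, x₀)).2) ∈ M
    rw [← hf, ← hMinv]; exact mem_image_of_mem _ hx₀
  · intro y hy
    have hmem : (α θ, y) ∈ ⇑f '' M := by rw [hMinv]; exact hy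
    obtain ⟨p, hpM, hpf⟩ := hmem
    have h1 : α p.1 = α θ := by rw [← hskew p, hpf]
    have h2 : p.1 = θ := α.injective h1
    have h3 : p.2 = x₀ := hu p.2 (by rw [← h2]; simpa using hpM)
    have hp : p = (θ, x₀) := Prod.ext h2 h3
    rw [hp, hf] at hpf
    exact (congrArg Prod.snd hpf).symm

/-- Auxiliary: a syndetically almost periodic homeomorphism of a compact metric space
has equicontinuous family of `ℤ`-iterates. -/
lemma ap_equi_aux {Θ : Type} [MetricSpace Θ] [CompactSpace Θ] (α : Θ ≃ₜ Θ)
    (hap : AlmostPeriodicHomeo α) :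
    ∀ ε > (0 : ℝ), ∃ δ > (0 : ℝ), ∀ θ θ' : Θ, dist θ θ' < δ →
      ∀ n : ℤ, dist (zIter α.toEquiv n θ) (zIter α.toEquiv n θ') < ε := by
  intro ε hε
  obtain ⟨N, hN⟩ := hap (ε / 3) (by positivity)
  have hu : ∀ m : ℤ, ∃ δ > (0 : ℝ), ∀ θ θ' : Θ, dist θ θ' < δ →
      dist (zIter α.toEquiv m θ) (zIter α.toEquiv m θ') < ε / 3 := by
    intro m
    have hc := CompactSpace.uniformContinuous_of_continuous (zIter_cont_aux α m)
    rw [Metric.uniformContinuous_iff] at hc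
    obtain ⟨δ, hδ, h⟩ := hc (ε / 3) (by positivity)
    exact ⟨δ, hδ, fun θ θ' hd => h hd⟩
  choose δ hδpos hδ using hu
  have hs : (Finset.Icc (-(N : ℤ)) (N : ℤ)).Nonempty := ⟨0, by simp⟩
  refine ⟨(Finset.Icc (-(N : ℤ)) (N : ℤ)).inf' hs δ, ?_, ?_⟩
  · exact (Finset.lt_inf'_iff hs).2 fun m _ => hδpos m
  · intro θ θ' hd n
    obtain ⟨k, hk, hkn⟩ := hN n
    have hm : n - k ∈ Finset.Icc (-(N : ℤ)) (N : ℤ) := by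
      rw [Finset.mem_Icc]; rw [abs_le] at hkn; omega
    have hsplit : ∀ x : Θ, zIter α.toEquiv n x =
        zIter α.toEquiv k (zIter α.toEquiv (n - k) x) := by
      intro x
      show (α.toEquiv ^ n) x = (α.toEquiv ^ k) ((α.toEquiv ^ (n - k)) x)
      rw [← Equiv.Perm.mul_apply, ← zpow_add]
      have he : k + (n - k) = n := by ring
      rw [he]
    have h1 : dist (zIter α.toEquiv n θ) (zIter α.toEquiv (n - k) θ) < ε / 3 := by
      rw [hsplit θ]; exact hk _
    have h2 : dist (zIter α.toEquiv n θ') (zIter α.toEquiv (n - k) θ') < ε / 3 := by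
      rw [hsplit θ']; exact hk _
    have h3 : dist (zIter α.toEquiv (n - k) θ) (zIter α.toEquiv (n - k) θ') < ε / 3 :=
      hδ (n - k) θ θ' (lt_of_lt_of_le hd (Finset.inf'_le δ hm))
    calc dist (zIter α.toEquiv n θ) (zIter α.toEquiv n θ')
        ≤ dist (zIter α.toEquiv n θ) (zIter α.toEquiv (n - k) θ)
          + dist (zIter α.toEquiv (n - k) θ) (zIter α.toEquiv (n - k) θ')
          + dist (zIter α.toEquiv (n - k) θ') (zIter α.toEquiv n θ') := dist_triangle4 _ _ _ _
      _ < ε / 3 + ε / 3 + ε / 3 := by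
          rw [dist_comm (zIter α.toEquiv (n - k) θ')]
          exact add_lt_add (add_lt_add h1 h3) h2
      _ = ε := by ring

/-- a pinched invariant set of a skew product over a minimal base has a
dense set of singleton fibres; the first-coordinate projection is an almost 1-1 factor
map onto the base, and if the base is almost periodic and `M` minimal then `M` is an
almost automorphic minimal set. -/
theorem stmt13 {Θ X : Type} [MetricSpace Θ] [CompactSpace Θ] [MetricSpace X] [CompactSpace X]
    (α : Θ ≃ₜ Θ) (hαmin : MinimalHomeo α)
    (f : (Θ × X) ≃ₜ (Θ × X)) (hskew : ∀ p : Θ × X, (f p).1 = α p.1)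
    (M : Set (Θ × X)) (hMne : M.Nonempty) (hMcomp : IsCompact M)
    (hMinv : ⇑f '' M = M) (hproj : Prod.fst '' M = Set.univ)
    (θ₀ : Θ) (hpinch : ∃! x : X, (θ₀, x) ∈ M) :
    Dense {θ : Θ | ∃! x : X, (θ, x) ∈ M} ∧
    (∀ hM : Set.MapsTo (⇑f) M M,
      IsFactorMap (restrictMap hM) (⇑α) (fun p : ↥M => (p : Θ × X).1) ∧
      AlmostOneOne (fun p : ↥M => (p : Θ × X).1)) ∧
    (AlmostPeriodicHomeo α → IsMinimalSet (⇑f) M → IsAAMinimal (⇑f) M) := by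
  -- every fibre is nonempty
  have hfib : ∀ θ : Θ, ∃ x : X, (θ, x) ∈ M := by
    intro θ
    have h1 : θ ∈ Prod.fst '' M := by rw [hproj]; exact mem_univ θ
    obtain ⟨p, hpM, hp1⟩ := h1
    exact ⟨p.2, by rw [← hp1]; simpa using hpM⟩
  -- invariance and skewness for the inverse
  have hMinv' : ⇑f.symm '' M = M := by
    conv_lhs => rw [← hMinv]
    rw [← Set.image_comp]
    simp
  have hskew' : ∀ p : Θ × X, (f.symm p).1 = α.symm p.1 := by
    intro p
    have h := hskew (f.symm p)
    rw [f.apply_symm_apply] at h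
    exact ((Equiv.eq_symm_apply α.toEquiv).mpr h.symm)
  -- singleton fibres along the orbit of θ₀
  have horb : ∀ n : ℤ, ∃! x : X, (zIter α.toEquiv n θ₀, x) ∈ M := by
    intro n
    induction n using Int.induction_on with
    | zero => simpa [zIter] using hpinch
    | succ k ih =>
        have h := pinch_step_aux α.toEquiv f.toEquiv hskew M hMinv _ ih
        have he : zIter α.toEquiv ((k : ℤ) + 1) θ₀ = α.toEquiv (zIter α.toEquiv k θ₀) :=
          zIter_succ_aux _ _ _
        rw [he]; exact h
    | pred k ih =>
        have h := pinch_step_aux α.symm.toEquiv f.symm.toEquiv hskew' M hMinv' _ ih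
        have he : zIter α.toEquiv (-(k : ℤ) - 1) θ₀ =
            α.symm.toEquiv (zIter α.toEquiv (-(k : ℤ)) θ₀) := by
          rw [zIter_pred_aux]; rfl
        rw [he]; exact h
  -- density of singleton fibres
  have hdense : Dense {θ : Θ | ∃! x : X, (θ, x) ∈ M} := by
    refine Dense.mono ?_ (hαmin θ₀)
    rintro θ ⟨n, rfl⟩
    exact horb n
  -- the projection is an almost 1-1 factor map
  have ha11 : AlmostOneOne (fun p : ↥M => (p : Θ × X).1) := by
    refine Dense.mono ?_ hdense
    rintro θ ⟨x, hx, hu⟩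
    refine ⟨⟨(θ, x), hx⟩, rfl, ?_⟩
    rintro ⟨⟨θ', x'⟩, hmem⟩ h1
    simp only at h1
    subst h1
    have := hu x' hmem
    subst this
    rfl
  have hfac : ∀ hM : Set.MapsTo (⇑f) M M,
      IsFactorMap (restrictMap hM) (⇑α) (fun p : ↥M => (p : Θ × X).1) := by
    intro hM
    refine ⟨continuous_fst.comp continuous_subtype_val, ?_, ?_⟩
    · intro θ
      obtain ⟨x, hx⟩ := hfib θ
      exact ⟨⟨(θ, x), hx⟩, rfl⟩
    · funext p
      exact hskew p.val
  refine ⟨hdense, fun hM => ⟨hfac hM, ha11⟩, ?_⟩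
  intro hap hmin
  refine ⟨hmin, fun hM => ⟨?_⟩⟩
  exact
    { Y := Θ
      g := α
      hmap := fun p : ↥M => (p : Θ × X).1
      factor := hfac hM
      a11 := ha11
      ap := ap_equi_aux α hap }


end
end

section
/- Let R be an irrational rotation of T¹ = ℝ/ℤ, let g : I → I be a continuous map of a compact interval, and let F = R × g : T¹ × I → T¹ × I, F(θ,x) = (R(θ), g(x)). If γ : T¹ → I is continuous and its graph Γ = {(θ,γ(θ))} is F-periodic, i.e. F^q(Γ) = Γ for some q ≥ 1, then γ is constant, and its constant value is a q-periodic point of g. In particular, the periodic continuous curves of F correspond exactly to the periodic points of g. -/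
open Set Function MeasureTheory

noncomputable section

/-- Auxiliary: the `ℤ`-orbit of an irrational point on `T¹` is dense. -/
lemma aux_zdense (a : ℝ) (ha : Irrational a) :
    Dense (Set.range fun n : ℤ => n • ((a : T1))) := by
  set S : AddSubgroup ℝ := AddSubgroup.closure {1, a} with hSdef
  have hSd : Dense (S : Set ℝ) := by
    rcases AddSubgroup.dense_or_cyclic S with h | ⟨gg, hgg⟩
    · exact h
    · exfalso
      have h1 : (1 : ℝ) ∈ S := AddSubgroup.subset_closure (by simp)
      have ha' : a ∈ S := AddSubgroup.subset_closure (by simp)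
      rw [hgg, AddSubgroup.mem_closure_singleton] at h1 ha'
      obtain ⟨n, hn⟩ := h1
      obtain ⟨m, hm⟩ := ha'
      rw [zsmul_eq_mul] at hn hm
      have hn0 : (n : ℝ) ≠ 0 := by
        rintro h0
        rw [h0, zero_mul] at hn
        exact one_ne_zero hn.symm
      refine ha ⟨(m : ℚ) / (n : ℚ), ?_⟩
      push_cast
      rw [div_eq_iff hn0, ← hm]
      have : gg = 1 / (n : ℝ) := by field_simp [← hn]; linarith
      rw [this]
      field_simp
  have hπc : Continuous ((↑) : ℝ → T1) := AddCircle.continuous_mk' 1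
  have hπs : Function.Surjective ((↑) : ℝ → T1) := fun y =>
    Quotient.inductionOn' y fun z => ⟨z, rfl⟩
  have himg : Dense (((↑) : ℝ → T1) '' (S : Set ℝ)) :=
    hπs.denseRange.dense_image hπc hSd
  refine himg.mono ?_
  rintro _ ⟨x, hx, rfl⟩
  have hx' : x ∈ AddSubgroup.closure ({1, a} : Set ℝ) := hx
  have : ∃ n : ℤ, ((x : T1)) = n • ((a : T1)) := by
    refine AddSubgroup.closure_induction
      (p := fun (y : ℝ) (_ : y ∈ AddSubgroup.closure ({1, a} : Set ℝ)) =>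
        ∃ n : ℤ, ((y : T1)) = n • ((a : T1)))
      ?_ ?_ ?_ ?_ hx'
    · rintro y (rfl | rfl)
      · exact ⟨0, by rw [zero_zsmul]; exact AddCircle.coe_period 1⟩
      · exact ⟨1, by rw [one_zsmul]⟩
    · exact ⟨0, by rw [zero_zsmul]; exact (QuotientAddGroup.mk_zero _)⟩
    · rintro y z _ _ ⟨ny, hy⟩ ⟨nz, hz⟩
      exact ⟨ny + nz, by rw [AddCircle.coe_add, hy, hz, add_zsmul]⟩
    · rintro y _ ⟨ny, hy⟩
      exact ⟨-ny, by rw [show ((↑(-y) : T1)) = -(↑y : T1) from rfl, hy, neg_zsmul]⟩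
  obtain ⟨n, hn⟩ := this
  exact ⟨n, hn.symm⟩

/-- Auxiliary: the forward (`ℕ`) orbit of any point under an irrational rotation is dense. -/
lemma aux_ndense (a : ℝ) (ha : Irrational a) (x : T1) :
    Dense (Set.range fun n : ℕ => x + n • ((a : T1))) := by
  set b : T1 := ((a : T1)) with hb
  have key : ∀ m : ℤ, m • b ∈ closure (Set.range fun n : ℕ => n • b) := by
    obtain ⟨c, -, φ, hφ, hlim⟩ :=
      IsCompact.tendsto_subseq (x := fun n : ℕ => (n : ℤ) • b) isCompact_univ
        (fun n => Set.mem_univ _)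
    intro m
    rw [Metric.mem_closure_iff]
    intro ε hε
    obtain ⟨N, hN⟩ := Metric.tendsto_atTop.mp hlim (ε / 2) (by linarith)
    set k : ℕ := N + φ N + m.natAbs with hk
    have hφk : (φ k : ℤ) ≥ (φ N : ℤ) + m.natAbs := by
      have h1 : (k : ℤ) ≤ (φ k : ℤ) := by exact_mod_cast hφ.le_apply
      have h2 : (N : ℤ) + (φ N : ℤ) + (m.natAbs : ℤ) = (k : ℤ) := by push_cast [hk]; ring
      omega
    have hnn : 0 ≤ (φ k : ℤ) - (φ N : ℤ) + m := by omega
    refine ⟨(((φ k : ℤ) - (φ N : ℤ) + m).toNat) • b, ⟨_, rfl⟩, ?_⟩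
    have hcast : ((((φ k : ℤ) - (φ N : ℤ) + m).toNat)) • b
        = ((φ k : ℤ) - (φ N : ℤ) + m) • b := by
      rw [← natCast_zsmul, Int.toNat_of_nonneg hnn]
    rw [hcast]
    have hdd : dist (((φ k : ℤ) - (φ N : ℤ) + m) • b) (m • b)
        = dist ((φ k : ℤ) • b) ((φ N : ℤ) • b) := by
      rw [dist_eq_norm, dist_eq_norm]
      congr 1
      have h4 : ((φ k : ℤ) - (φ N : ℤ) + m) • b - m • b = (φ k : ℤ) • b - (φ N : ℤ) • b := by
        rw [add_zsmul, add_sub_cancel_right, sub_zsmul, ← sub_eq_add_neg]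
      rw [h4]
    rw [dist_comm, hdd, dist_comm]
    have h1 : dist ((φ N : ℤ) • b) c < ε / 2 := hN N le_rfl
    have h2 : dist ((φ k : ℤ) • b) c < ε / 2 := hN k (by omega)
    calc dist ((φ N : ℤ) • b) ((φ k : ℤ) • b)
        ≤ dist ((φ N : ℤ) • b) c + dist c ((φ k : ℤ) • b) := dist_triangle _ _ _
      _ < ε / 2 + ε / 2 := by rw [dist_comm c]; exact add_lt_add h1 h2
      _ = ε := by ring
  have hzsub : Set.range (fun m : ℤ => m • b) ⊆ closure (Set.range fun n : ℕ => n • b) := by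
    rintro _ ⟨m, rfl⟩; exact key m
  have hdn : Dense (Set.range fun n : ℕ => n • b) := by
    rw [dense_iff_closure_eq]
    refine Set.eq_univ_of_univ_subset ?_
    have := (aux_zdense a ha)
    rw [dense_iff_closure_eq] at this
    calc (Set.univ : Set T1) = closure (Set.range fun m : ℤ => m • b) := this.symm
      _ ⊆ closure (closure (Set.range fun n : ℕ => n • b)) := closure_mono hzsub
      _ = closure (Set.range fun n : ℕ => n • b) := closure_closure
  have hsurj : Function.Surjective (fun y : T1 => x + y) := fun y => ⟨y - x, by simp⟩
  have himg : Dense ((fun y : T1 => x + y) '' Set.range fun n : ℕ => n • b) :=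
    DenseRange.dense_image hsurj.denseRange (continuous_const.add continuous_id) hdn
  have hco : (fun n : ℕ => x + n • b) = (fun y : T1 => x + y) ∘ (fun n : ℕ => n • b) := rfl
  rw [hco, Set.range_comp]
  exact himg

/-- for a direct product `F = R × g` of an irrational rotation and an
interval map, every periodic continuous curve is constant, with value a periodic point
of `g`; conversely every periodic point of `g` yields a constant periodic curve. -/
theorem stmt15 {I : Set ℝ} (hIcomp : IsCompact I) (hIconn : I.OrdConnected)
    (ρ : ℝ) (hρ : Irrational ρ)
    (g : ↥I → ↥I) (hg : Continuous g)
    (F : T1 × ↥I → T1 × ↥I) (hF : F = fun p : T1 × ↥I => (p.1 + (ρ : T1), g p.2))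
    (q : ℕ) (hq : 1 ≤ q)
    (γ : T1 → ↥I) (hγ : Continuous γ)
    (hper : F^[q] '' curveGraph γ = curveGraph γ) :
    (∃ cv : ↥I, (∀ θ : T1, γ θ = cv) ∧ g^[q] cv = cv) ∧
    (∀ cv : ↥I, g^[q] cv = cv →
      F^[q] '' curveGraph (fun _ : T1 => cv) = curveGraph (fun _ : T1 => cv)) := by
  have hiter : ∀ (n : ℕ) (p : T1 × ↥I),
      F^[n] p = (p.1 + (((n : ℝ) * ρ : ℝ) : T1), g^[n] p.2) := by
    intro n
    induction n with
    | zero => intro p; simp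
    | succ n ih =>
      intro p
      rw [Function.iterate_succ_apply', ih, hF]
      have hc : (((n + 1 : ℕ) : ℝ) * ρ : ℝ) = ((n : ℝ) * ρ) + ρ := by push_cast; ring
      simp only [hc, AddCircle.coe_add, Function.iterate_succ_apply' g, ← add_assoc]
  set A : T1 := (((q : ℝ) * ρ : ℝ) : T1) with hA
  have hpt : ∀ θ : T1, g^[q] (γ θ) = γ (θ + A) := by
    intro θ
    have hmem : (θ, γ θ) ∈ curveGraph γ := rfl
    have : F^[q] (θ, γ θ) ∈ curveGraph γ := by
      rw [← hper]; exact ⟨(θ, γ θ), hmem, rfl⟩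
    rw [hiter q (θ, γ θ)] at this
    exact this
  constructor
  · -- existence of θc with fixed value
    have hφc : Continuous fun θ : T1 => ((γ θ : ℝ)) := continuous_subtype_val.comp hγ
    have hdc : Continuous fun θ : T1 => ((γ (θ + A) : ℝ)) - ((γ θ : ℝ)) :=
      (hφc.comp (continuous_id.add continuous_const)).sub hφc
    obtain ⟨θmax, -, hmax⟩ := isCompact_univ.exists_isMaxOn Set.univ_nonempty
      hφc.continuousOn
    obtain ⟨θmin, -, hmin⟩ := isCompact_univ.exists_isMinOn Set.univ_nonempty
      hφc.continuousOn
    set d : T1 → ℝ := fun θ => ((γ (θ + A) : ℝ)) - ((γ θ : ℝ)) with hd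
    have hd1 : d θmax ≤ 0 := sub_nonpos.2 (hmax (Set.mem_univ _))
    have hd2 : 0 ≤ d θmin := sub_nonneg.2 (hmin (Set.mem_univ _))
    have hpre : IsPreconnected (d '' Set.univ) :=
      isPreconnected_univ.image d hdc.continuousOn
    have h0 : (0 : ℝ) ∈ d '' Set.univ := by
      have := hpre.ordConnected.out (⟨θmax, Set.mem_univ _, rfl⟩ : d θmax ∈ d '' Set.univ)
        (⟨θmin, Set.mem_univ _, rfl⟩ : d θmin ∈ d '' Set.univ)
      exact this ⟨hd1, hd2⟩
    obtain ⟨θc, -, hθc⟩ := h0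
    have hfixA : γ (θc + A) = γ θc := Subtype.ext (by
      have : ((γ (θc + A) : ℝ)) - ((γ θc : ℝ)) = 0 := hθc
      linarith)
    have hfix : g^[q] (γ θc) = γ θc := (hpt θc).trans hfixA
    refine ⟨γ θc, ?_, hfix⟩
    -- now show γ is constant
    have hstep : ∀ θ : T1, γ θ = γ θc → γ (θ + A) = γ θc := by
      intro θ h
      rw [← hpt θ, h, hfix]
    have horb : ∀ n : ℕ, γ (θc + n • A) = γ θc := by
      intro n
      induction n with
      | zero => simp
      | succ n ih =>
        have : θc + (n + 1) • A = (θc + n • A) + A := by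
          rw [succ_nsmul, ← add_assoc]
        rw [this]
        exact hstep _ ih
    have hirr : Irrational ((q : ℝ) * ρ) := hρ.natCast_mul (by omega)
    have hdense := aux_ndense ((q : ℝ) * ρ) hirr θc
    have hSclosed : IsClosed {θ : T1 | γ θ = γ θc} := isClosed_eq hγ continuous_const
    intro θ
    have hθ : θ ∈ closure (Set.range fun n : ℕ => θc + n • A) := hdense θ
    have hsub : (Set.range fun n : ℕ => θc + n • A) ⊆ {θ : T1 | γ θ = γ θc} := by
      rintro _ ⟨n, rfl⟩; exact horb n
    have := (closure_mono hsub).trans_eq hSclosed.closure_eq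
    exact this hθ
  · -- converse
    intro cv hcv
    ext p
    constructor
    · rintro ⟨p0, hp0, rfl⟩
      have h2 : p0.2 = cv := hp0
      show (F^[q] p0).2 = cv
      rw [hiter q p0, ]
      show g^[q] p0.2 = cv
      rw [h2, hcv]
    · intro hp
      have h2 : p.2 = cv := hp
      refine ⟨(p.1 - A, cv), rfl, ?_⟩
      rw [hiter q (p.1 - A, cv)]
      show (p.1 - A + A, g^[q] cv) = p
      rw [sub_add_cancel, hcv]
      exact Prod.ext rfl h2.symm


end
end
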